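/- For θ > 0 and c0 > c1 > 0: (i) J is strictly increasing on (−∞, s_a], with J(s) → −∞ as s → −∞, and maps (−∞, s_a] bijectively onto (−∞, J(s_a)]; (ii) J is strictly decreasing on (0, s_b], with J(s) → +∞ as s → 0⁺, and maps (0, s_b] bijectively onto [J(s_b), +∞); (iii) J is strictly increasing on [s_b, +∞), with J(s) → +∞ as s → +∞, and maps [s_b, +∞) bijectively onto [J(s_b), +∞). -/

import Mathlib

/-- The map `J(s; c0, c1) = (c1*s + c0) * ((s+1)/s)^(1/θ)` for real `s`,
using the real power of the positive quantity `(s+1)/s`. -/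
noncomputable def Jmap (θ c0 c1 s : ℝ) : ℝ :=
  (c1 * s + c0) * ((s + 1) / s) ^ (1 / θ)

/-- `s_a = (1−θ)/(2θ) − (1/(2θ))·√(4θ·(c0/c1) + (1−θ)²)`. -/
noncomputable def sA (θ r : ℝ) : ℝ :=
  (1 - θ) / (2 * θ) - 1 / (2 * θ) * Real.sqrt (4 * θ * r + (1 - θ) ^ 2)

/-- `s_b = (1−θ)/(2θ) + (1/(2θ))·√(4θ·(c0/c1) + (1−θ)²)`. -/
noncomputable def sB (θ r : ℝ) : ℝ :=
  (1 - θ) / (2 * θ) + 1 / (2 * θ) * Real.sqrt (4 * θ * r + (1 - θ) ^ 2)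

open Filter Set Real Topology

section Aux

variable {θ c0 c1 : ℝ}

lemma hD_sq (hθ : 0 < θ) (hc1 : 0 < c1) (hc01 : c1 < c0) :
    Real.sqrt (4 * θ * (c0/c1) + (1 - θ) ^ 2) ^ 2 = 4 * θ * (c0/c1) + (1 - θ) ^ 2 := by
  have hr : 1 < c0 / c1 := (one_lt_div hc1).2 hc01
  exact Real.sq_sqrt (by nlinarith)

lemma sA_lt (hθ : 0 < θ) (hc1 : 0 < c1) (hc01 : c1 < c0) : sA θ (c0/c1) < -1 := by
  have hr : 1 < c0 / c1 := (one_lt_div hc1).2 hc01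
  have hD2 := hD_sq hθ hc1 hc01
  set D := Real.sqrt (4 * θ * (c0/c1) + (1 - θ) ^ 2) with hD
  have hDnn : 0 ≤ D := Real.sqrt_nonneg _
  have h2θ : (0:ℝ) < 2 * θ := by linarith
  have key : sA θ (c0/c1) = ((1 - θ) - D) / (2 * θ) := by rw [sA]; ring
  rw [key, div_lt_iff₀ h2θ]
  nlinarith [sq_nonneg (D - (1 + θ))]

lemma sB_pos (hθ : 0 < θ) (hc1 : 0 < c1) (hc01 : c1 < c0) : 0 < sB θ (c0/c1) := by
  have hr : 1 < c0 / c1 := (one_lt_div hc1).2 hc01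
  have hD2 := hD_sq hθ hc1 hc01
  set D := Real.sqrt (4 * θ * (c0/c1) + (1 - θ) ^ 2) with hD
  have hDnn : 0 ≤ D := Real.sqrt_nonneg _
  have h2θ : (0:ℝ) < 2 * θ := by linarith
  have key : sB θ (c0/c1) = ((1 - θ) + D) / (2 * θ) := by rw [sB]; ring
  rw [key, lt_div_iff₀ h2θ]
  nlinarith [sq_nonneg (D - (1 - θ)), sq_nonneg (D + (1 - θ))]

lemma Q_pos_left (hθ : 0 < θ) (hc1 : 0 < c1) (hc01 : c1 < c0) {s : ℝ}
    (hs : s < sA θ (c0/c1)) : 0 < θ * c1 * (s * (s + 1)) - (c1 * s + c0) := by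
  have hc0 : c0 = c1 * (c0/c1) := by field_simp
  have hD2 := hD_sq hθ hc1 hc01
  set r := c0/c1
  set D := Real.sqrt (4 * θ * r + (1 - θ) ^ 2) with hD
  have hDnn : 0 ≤ D := Real.sqrt_nonneg _
  have h2θ : (0:ℝ) < 2 * θ := by linarith
  have key : sA θ r = ((1 - θ) - D) / (2 * θ) := by rw [sA]; ring
  rw [key, lt_div_iff₀ h2θ] at hs
  have ha : 2 * θ * s - (1 - θ) < -D := by nlinarith
  have h1 : 0 < (2 * θ * s - (1 - θ)) ^ 2 - D ^ 2 := by
    nlinarith [mul_pos (show 0 < -(2*θ*s - (1-θ) + D) by linarith)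
      (show 0 < -(2*θ*s - (1-θ) - D) by linarith)]
  have h2 : 0 < θ * s ^ 2 - (1 - θ) * s - r := by nlinarith
  nlinarith [mul_pos hc1 h2]

lemma Q_neg_mid (hθ : 0 < θ) (hc1 : 0 < c1) (hc01 : c1 < c0) {s : ℝ}
    (hs0 : 0 < s) (hs : s < sB θ (c0/c1)) :
    θ * c1 * (s * (s + 1)) - (c1 * s + c0) < 0 := by
  have hc0 : c0 = c1 * (c0/c1) := by field_simp
  have hr : 1 < c0 / c1 := (one_lt_div hc1).2 hc01
  have hD2 := hD_sq hθ hc1 hc01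
  set r := c0/c1
  set D := Real.sqrt (4 * θ * r + (1 - θ) ^ 2) with hD
  have hDnn : 0 ≤ D := Real.sqrt_nonneg _
  have h2θ : (0:ℝ) < 2 * θ := by linarith
  have key : sB θ r = ((1 - θ) + D) / (2 * θ) := by rw [sB]; ring
  rw [key] at hs
  have hsb : 2 * θ * s < (1 - θ) + D := by
    have := (lt_div_iff₀ h2θ).1 hs; nlinarith
  have hD1 : 1 - θ < D := by nlinarith [sq_nonneg (D - (1 - θ)), sq_nonneg (D + (1 - θ))]
  have ha' : -D < 2 * θ * s - (1 - θ) := by nlinarith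
  have h1 : (2 * θ * s - (1 - θ)) ^ 2 - D ^ 2 < 0 := by
    nlinarith [mul_pos (show 0 < (2*θ*s - (1-θ)) + D by linarith)
      (show 0 < D - (2*θ*s - (1-θ)) by linarith)]
  have h2 : θ * s ^ 2 - (1 - θ) * s - r < 0 := by nlinarith
  nlinarith [mul_pos hc1 (show 0 < -(θ * s ^ 2 - (1 - θ) * s - r) by linarith)]

lemma Q_pos_right (hθ : 0 < θ) (hc1 : 0 < c1) (hc01 : c1 < c0) {s : ℝ}
    (hs : sB θ (c0/c1) < s) : 0 < θ * c1 * (s * (s + 1)) - (c1 * s + c0) := by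
  have hc0 : c0 = c1 * (c0/c1) := by field_simp
  have hD2 := hD_sq hθ hc1 hc01
  set r := c0/c1
  set D := Real.sqrt (4 * θ * r + (1 - θ) ^ 2) with hD
  have hDnn : 0 ≤ D := Real.sqrt_nonneg _
  have h2θ : (0:ℝ) < 2 * θ := by linarith
  have key : sB θ r = ((1 - θ) + D) / (2 * θ) := by rw [sB]; ring
  rw [key, div_lt_iff₀ h2θ] at hs
  have ha : D < 2 * θ * s - (1 - θ) := by nlinarith
  have h1 : 0 < (2 * θ * s - (1 - θ)) ^ 2 - D ^ 2 := by
    nlinarith [mul_pos (show 0 < (2*θ*s - (1-θ)) + D by linarith)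
      (show 0 < (2*θ*s - (1-θ)) - D by linarith)]
  have h2 : 0 < θ * s ^ 2 - (1 - θ) * s - r := by nlinarith
  nlinarith [mul_pos hc1 h2]

lemma frac_pos {s : ℝ} (hs : 0 < s * (s + 1)) : 0 < (s + 1) / s := by
  have hs0 : s ≠ 0 := by rintro rfl; simp at hs
  have h : (s + 1) / s = (s * (s + 1)) / (s * s) := by field_simp
  rw [h]; exact div_pos hs (mul_self_pos.2 hs0)

lemma Jmap_hasDerivAt (θ c0 c1 : ℝ) (hθ : 0 < θ) {s : ℝ} (hs : 0 < s * (s + 1)) :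
    HasDerivAt (Jmap θ c0 c1)
      (((s + 1) / s) ^ (1 / θ) * (c1 - (c1 * s + c0) / (θ * (s * (s + 1))))) s := by
  have hs0 : s ≠ 0 := by rintro rfl; simp at hs
  have hs1 : s + 1 ≠ 0 := by rintro h; rw [h, mul_zero] at hs; exact lt_irrefl 0 hs
  have hf : 0 < (s + 1) / s := frac_pos hs
  have hd : HasDerivAt (fun x : ℝ => (x + 1) / x) ((1 * s - (s + 1) * 1) / s ^ 2) s :=
    ((hasDerivAt_id s).add_const 1).div (hasDerivAt_id s) hs0
  have hr : HasDerivAt (fun x : ℝ => ((x + 1) / x) ^ (1 / θ))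
      ((1 * s - (s + 1) * 1) / s ^ 2 * (1 / θ) * ((s + 1) / s) ^ (1 / θ - 1)) s :=
    hd.rpow_const (Or.inl hf.ne')
  have hlin : HasDerivAt (fun x : ℝ => c1 * x + c0) (c1 * 1) s :=
    ((hasDerivAt_id s).const_mul c1).add_const c0
  have hJ := hlin.mul hr
  have heq : ((s + 1) / s) ^ (1 / θ) * (c1 - (c1 * s + c0) / (θ * (s * (s + 1))))
      = c1 * 1 * (((s + 1) / s) ^ (1 / θ)) + (c1 * s + c0) *
        ((1 * s - (s + 1) * 1) / s ^ 2 * (1 / θ) * ((s + 1) / s) ^ (1 / θ - 1)) := by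
    have hsub : ((s + 1) / s) ^ (1 / θ - 1) = ((s + 1) / s) ^ (1 / θ) / ((s + 1) / s) := by
      rw [Real.rpow_sub hf, Real.rpow_one]
    rw [hsub]
    field_simp
    ring
  rw [heq]
  exact hJ

lemma Jmap_continuousAt (θ c0 c1 : ℝ) (hθ : 0 < θ) {s : ℝ} (hs : s ≠ 0) :
    ContinuousAt (Jmap θ c0 c1) s := by
  have h1 : ContinuousAt (fun x : ℝ => (x + 1) / x) s :=
    (continuousAt_id.add continuousAt_const).div continuousAt_id hs
  exact ((continuousAt_const.mul continuousAt_id).add continuousAt_const).mul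
    (h1.rpow_const (Or.inr (by positivity)))

end Aux

theorem stmt6 (θ c0 c1 : ℝ) (hθ : 0 < θ) (hc1 : 0 < c1) (hc01 : c1 < c0) :
    (StrictMonoOn (Jmap θ c0 c1) (Set.Iic (sA θ (c0 / c1))) ∧
      Filter.Tendsto (Jmap θ c0 c1) Filter.atBot Filter.atBot ∧
      Set.BijOn (Jmap θ c0 c1) (Set.Iic (sA θ (c0 / c1)))
        (Set.Iic (Jmap θ c0 c1 (sA θ (c0 / c1))))) ∧
    (StrictAntiOn (Jmap θ c0 c1) (Set.Ioc 0 (sB θ (c0 / c1))) ∧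
      Filter.Tendsto (Jmap θ c0 c1) (nhdsWithin 0 (Set.Ioi 0)) Filter.atTop ∧
      Set.BijOn (Jmap θ c0 c1) (Set.Ioc 0 (sB θ (c0 / c1)))
        (Set.Ici (Jmap θ c0 c1 (sB θ (c0 / c1))))) ∧
    (StrictMonoOn (Jmap θ c0 c1) (Set.Ici (sB θ (c0 / c1))) ∧
      Filter.Tendsto (Jmap θ c0 c1) Filter.atTop Filter.atTop ∧
      Set.BijOn (Jmap θ c0 c1) (Set.Ici (sB θ (c0 / c1)))
        (Set.Ici (Jmap θ c0 c1 (sB θ (c0 / c1))))) := by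
  have hc0 : (0:ℝ) < c0 := lt_trans hc1 hc01
  have hsa : sA θ (c0/c1) < -1 := sA_lt hθ hc1 hc01
  have hsb : 0 < sB θ (c0/c1) := sB_pos hθ hc1 hc01
  set a := sA θ (c0/c1) with ha
  set b := sB θ (c0/c1) with hb
  set J := Jmap θ c0 c1 with hJ
  have hp : 0 < 1 / θ := by positivity
  -- continuity on the three sets
  have hcont₁ : ContinuousOn J (Iic a) := fun x hx =>
    (Jmap_continuousAt θ c0 c1 hθ (show x ≠ 0 by
      have : x < 0 := lt_of_le_of_lt hx (by linarith); exact this.ne)).continuousWithinAt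
  have hcont₂ : ContinuousOn J (Ioc 0 b) := fun x hx =>
    (Jmap_continuousAt θ c0 c1 hθ hx.1.ne').continuousWithinAt
  have hcont₃ : ContinuousOn J (Ici b) := fun x hx =>
    (Jmap_continuousAt θ c0 c1 hθ (lt_of_lt_of_le hsb hx).ne').continuousWithinAt
  -- strict monotonicity on (−∞, a]
  have hmono₁ : StrictMonoOn J (Iic a) := by
    apply strictMonoOn_of_deriv_pos (convex_Iic a) hcont₁
    intro x hx
    rw [interior_Iic] at hx
    have hxlt : x < -1 := lt_trans hx hsa
    have hxprod : 0 < x * (x + 1) := by nlinarith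
    rw [hJ, (Jmap_hasDerivAt θ c0 c1 hθ hxprod).deriv]
    have hQ := Q_pos_left hθ hc1 hc01 hx
    apply mul_pos (Real.rpow_pos_of_pos (frac_pos hxprod) _)
    rw [sub_pos, div_lt_iff₀ (by positivity)]
    nlinarith [hQ]
  -- strict antitonicity on (0, b]
  have hanti : StrictAntiOn J (Ioc 0 b) := by
    apply strictAntiOn_of_deriv_neg (convex_Ioc 0 b) hcont₂
    intro x hx
    rw [interior_Ioc] at hx
    have hxprod : 0 < x * (x + 1) := by nlinarith [hx.1]
    rw [hJ, (Jmap_hasDerivAt θ c0 c1 hθ hxprod).deriv]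
    have hQ := Q_neg_mid hθ hc1 hc01 hx.1 hx.2
    apply mul_neg_of_pos_of_neg (Real.rpow_pos_of_pos (frac_pos hxprod) _)
    rw [sub_neg, lt_div_iff₀ (by positivity)]
    nlinarith [hQ]
  -- strict monotonicity on [b, ∞)
  have hmono₂ : StrictMonoOn J (Ici b) := by
    apply strictMonoOn_of_deriv_pos (convex_Ici b) hcont₃
    intro x hx
    rw [interior_Ici] at hx
    have hx0 : 0 < x := lt_trans hsb hx
    have hxprod : 0 < x * (x + 1) := by nlinarith
    rw [hJ, (Jmap_hasDerivAt θ c0 c1 hθ hxprod).deriv]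
    have hQ := Q_pos_right hθ hc1 hc01 hx
    apply mul_pos (Real.rpow_pos_of_pos (frac_pos hxprod) _)
    rw [sub_pos, div_lt_iff₀ (by positivity)]
    nlinarith [hQ]
  -- limits
  have hfrac_bot : Tendsto (fun s : ℝ => (s + 1) / s) atBot (𝓝 1) := by
    have hinv : Tendsto (fun s : ℝ => s⁻¹) atBot (𝓝 (0:ℝ)) := by
      have h := ((tendsto_neg_atBot_atTop : Tendsto (Neg.neg : ℝ → ℝ) atBot atTop)).inv_tendsto_atTop
      have h2 := h.neg
      rw [neg_zero] at h2
      exact h2.congr fun x => by simp [inv_neg]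
    have h : Tendsto (fun s : ℝ => 1 + s⁻¹) atBot (𝓝 (1 + 0)) :=
      tendsto_const_nhds.add hinv
    rw [add_zero] at h
    refine h.congr' ?_
    filter_upwards [eventually_lt_atBot (0:ℝ)] with x hx
    field_simp [hx.ne]
  have hfrac_top : Tendsto (fun s : ℝ => (s + 1) / s) atTop (𝓝 1) := by
    have h : Tendsto (fun s : ℝ => 1 + s⁻¹) atTop (𝓝 (1 + 0)) :=
      tendsto_const_nhds.add tendsto_inv_atTop_zero
    rw [add_zero] at h
    refine h.congr' ?_
    filter_upwards [eventually_gt_atTop (0:ℝ)] with x hx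
    field_simp [hx.ne']
  have hpow_bot : Tendsto (fun s : ℝ => ((s + 1) / s) ^ (1/θ)) atBot (𝓝 1) := by
    have h := (Real.continuousAt_rpow_const 1 (1/θ) (Or.inl one_ne_zero)).tendsto.comp hfrac_bot
    rwa [Real.one_rpow] at h
  have hpow_top : Tendsto (fun s : ℝ => ((s + 1) / s) ^ (1/θ)) atTop (𝓝 1) := by
    have h := (Real.continuousAt_rpow_const 1 (1/θ) (Or.inl one_ne_zero)).tendsto.comp hfrac_top
    rwa [Real.one_rpow] at h
  have hlin_bot : Tendsto (fun s : ℝ => c1 * s + c0) atBot atBot :=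
    tendsto_atBot_add_const_right _ c0 ((tendsto_const_mul_atBot_of_pos hc1).2 tendsto_id)
  have hlin_top : Tendsto (fun s : ℝ => c1 * s + c0) atTop atTop :=
    tendsto_atTop_add_const_right _ c0 ((tendsto_const_mul_atTop_of_pos hc1).2 tendsto_id)
  have htend_bot : Tendsto J atBot atBot := by
    rw [hJ]; unfold Jmap
    exact hlin_bot.atBot_mul_pos one_pos hpow_bot
  have htend_top : Tendsto J atTop atTop := by
    rw [hJ]; unfold Jmap
    exact hlin_top.atTop_mul_pos one_pos hpow_top
  have htend_zero : Tendsto J (𝓝[>] (0:ℝ)) atTop := by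
    have hfrac0 : Tendsto (fun s : ℝ => (s + 1) / s) (𝓝[>] (0:ℝ)) atTop := by
      have h : Tendsto (fun s : ℝ => 1 + s⁻¹) (𝓝[>] (0:ℝ)) atTop :=
        tendsto_atTop_add_const_left _ 1 tendsto_inv_nhdsGT_zero
      refine h.congr' ?_
      filter_upwards [self_mem_nhdsWithin] with x (hx : x ∈ Ioi (0:ℝ))
      have hx0 : (x:ℝ) ≠ 0 := (mem_Ioi.1 hx).ne'
      field_simp [hx0]
    have hpow0 : Tendsto (fun s : ℝ => ((s + 1) / s) ^ (1/θ)) (𝓝[>] (0:ℝ)) atTop :=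
      (tendsto_rpow_atTop hp).comp hfrac0
    have hlin0 : Tendsto (fun s : ℝ => c1 * s + c0) (𝓝[>] (0:ℝ)) (𝓝 c0) := by
      have h : Tendsto (fun s : ℝ => c1 * s + c0) (𝓝 (0:ℝ)) (𝓝 (c1 * 0 + c0)) :=
        ((continuous_const.mul continuous_id).add continuous_const).tendsto 0
      rw [mul_zero, zero_add] at h
      exact h.mono_left nhdsWithin_le_nhds
    rw [hJ]; unfold Jmap
    exact hlin0.pos_mul_atTop hc0 hpow0
  refine ⟨⟨hmono₁, htend_bot, ?_, hmono₁.injOn, ?_⟩,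
    ⟨hanti, htend_zero, ?_, hanti.injOn, ?_⟩,
    ⟨hmono₂, htend_top, ?_, hmono₂.injOn, ?_⟩⟩
  · -- MapsTo (i)
    intro x hx
    exact mem_Iic.2 (hmono₁.monotoneOn hx (mem_Iic.2 le_rfl) hx)
  · -- SurjOn (i)
    intro y hy
    obtain ⟨t, hty, hta⟩ : ∃ t, J t ≤ y ∧ t ≤ a :=
      ((htend_bot.eventually_le_atBot y).and (eventually_le_atBot a)).exists
    obtain ⟨x, hx, hxy⟩ := intermediate_value_Icc hta (hcont₁.mono Icc_subset_Iic_self)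
      ⟨hty, hy⟩
    exact ⟨x, mem_Iic.2 hx.2, hxy⟩
  · -- MapsTo (ii)
    intro x hx
    exact mem_Ici.2 (hanti.antitoneOn hx ⟨hsb, le_rfl⟩ hx.2)
  · -- SurjOn (ii)
    intro y hy
    obtain ⟨t, hty, ht⟩ : ∃ t, y ≤ J t ∧ t ∈ Ioo 0 b :=
      ((htend_zero.eventually_ge_atTop y).and
        (eventually_of_mem (Ioo_mem_nhdsGT_of_mem ⟨le_rfl, hsb⟩) fun x hx => hx)).exists
    obtain ⟨x, hx, hxy⟩ := intermediate_value_Icc' ht.2.le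
      (hcont₂.mono fun z hz => ⟨lt_of_lt_of_le ht.1 hz.1, hz.2⟩) ⟨hy, hty⟩
    exact ⟨x, ⟨lt_of_lt_of_le ht.1 hx.1, hx.2⟩, hxy⟩
  · -- MapsTo (iii)
    intro x hx
    exact mem_Ici.2 (hmono₂.monotoneOn (mem_Ici.2 le_rfl) hx hx)
  · -- SurjOn (iii)
    intro y hy
    obtain ⟨t, hty, hbt⟩ : ∃ t, y ≤ J t ∧ b ≤ t :=
      ((htend_top.eventually_ge_atTop y).and (eventually_ge_atTop b)).exists
    obtain ⟨x, hx, hxy⟩ := intermediate_value_Icc hbt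
      (hcont₃.mono Icc_subset_Ici_self) ⟨hy, hty⟩
    exact ⟨x, mem_Ici.2 hx.1, hxy⟩
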